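/- arXiv:1412.1844 — 7 statements merged into one kernel-verified Lean document; each statement's English description precedes it below -/
import Mathlib

section
/- The ISTA step x⁺ = argmin_y [f(x) + (y-x)ᵀ∇f(x) + (1/(2α))||y-x||² + τ||y||₁] with stepsize 0 < α ≤ 1/L satisfies the Q-linear decrease F(x⁺) - F(x*) ≤ (1 - λα)(F(x) - F(x*)), where x* is the minimizer of F. -/
open Matrix in
theorem ista_step_linear_decrease
    (n : ℕ) (A : Matrix (Fin n) (Fin n) ℝ) (hA : A.IsSymm)
    (lam L : ℝ) (hlam : 0 < lam)
    (hAlow : ∀ y : Fin n → ℝ, lam * (y ⬝ᵥ y) ≤ y ⬝ᵥ A.mulVec y)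
    (hAup : ∀ y : Fin n → ℝ, y ⬝ᵥ A.mulVec y ≤ L * (y ⬝ᵥ y))
    (b : Fin n → ℝ) (τ : ℝ) (hτ : 0 ≤ τ)
    (f : (Fin n → ℝ) → ℝ) (hf : ∀ y, f y = 1 / 2 * (y ⬝ᵥ A.mulVec y) - b ⬝ᵥ y)
    (F : (Fin n → ℝ) → ℝ) (hF : ∀ y, F y = f y + τ * ∑ i, |y i|)
    (xstar : Fin n → ℝ) (hxstar : ∀ y, F xstar ≤ F y)
    (x : Fin n → ℝ) (α : ℝ) (hα0 : 0 < α) (hαL : α ≤ 1 / L)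
    (m : (Fin n → ℝ) → ℝ)
    (hm : ∀ y, m y = f x + (y - x) ⬝ᵥ (A.mulVec x - b)
        + 1 / (2 * α) * ((y - x) ⬝ᵥ (y - x)) + τ * ∑ i, |y i|)
    (xp : Fin n → ℝ) (hxp : ∀ y, m xp ≤ m y) :
    F xp - F xstar ≤ (1 - lam * α) * (F x - F xstar) := by
  -- trivial case n = 0
  rcases Nat.eq_zero_or_pos n with hn | hn
  · subst hn
    have h1 : xp = xstar := funext fun i => i.elim0
    have h2 : x = xstar := funext fun i => i.elim0
    rw [h1, h2]; simp
  -- L > 0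
  have hL : 0 < L := by
    by_contra h
    push_neg at h
    rcases lt_or_eq_of_le h with h' | h'
    · have : 1 / L < 0 := div_neg_of_pos_of_neg one_pos h'
      linarith
    · rw [h', div_zero] at hαL; linarith
  have hαL1 : α * L ≤ 1 := by
    rw [le_div_iff₀ hL] at hαL; linarith
  -- lam ≤ L
  have hlamL : lam ≤ L := by
    set e : Fin n → ℝ := Pi.single ⟨0, hn⟩ 1 with he
    have hee : e ⬝ᵥ e = 1 := by
      simp [he, dotProduct, Pi.single_apply]
    have h1 := hAlow e
    have h2 := hAup e
    rw [hee] at h1 h2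
    linarith
  -- symmetry
  have hsymm : ∀ u v : Fin n → ℝ, u ⬝ᵥ A.mulVec v = v ⬝ᵥ A.mulVec u := by
    intro u v
    rw [Matrix.dotProduct_mulVec, ← Matrix.mulVec_transpose, hA.eq, dotProduct_comm]
  have hself : ∀ w : Fin n → ℝ, (0:ℝ) ≤ w ⬝ᵥ w :=
    fun w => Finset.sum_nonneg fun i _ => mul_self_nonneg _
  -- quadratic expansion
  have expand : ∀ u v : Fin n → ℝ, f v = f u + (v - u) ⬝ᵥ (A.mulVec u - b)
      + 1 / 2 * ((v - u) ⬝ᵥ A.mulVec (v - u)) := by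
    intro u v
    rw [hf, hf]
    have h := hsymm u v
    simp only [Matrix.mulVec_sub, dotProduct_sub, sub_dotProduct]
    linarith [dotProduct_comm b v, dotProduct_comm b u]
  set t := lam * α with ht
  have ht0 : 0 < t := mul_pos hlam hα0
  have ht1 : t ≤ 1 := by
    have : lam * α ≤ lam * (1 / L) := mul_le_mul_of_nonneg_left hαL (le_of_lt hlam)
    have h2 : lam * (1 / L) ≤ 1 := by
      rw [mul_one_div, div_le_one hL]; exact hlamL
    linarith
  set d : Fin n → ℝ := xstar - x with hd
  set y : Fin n → ℝ := x + t • d with hy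
  -- Step A : F xp ≤ m xp
  have stepA : F xp ≤ m xp := by
    rw [hF, hm, expand x xp]
    have h1 := hAup (xp - x)
    have h2 := hself (xp - x)
    have h3 : L / 2 * ((xp - x) ⬝ᵥ (xp - x)) ≤ 1 / (2 * α) * ((xp - x) ⬝ᵥ (xp - x)) := by
      have hL1 : L ≤ 1 / α := by rw [le_div_iff₀ hα0]; linarith
      have h5 := mul_le_mul_of_nonneg_right hL1 h2
      have h4 : 1 / (2 * α) * ((xp - x) ⬝ᵥ (xp - x)) = (1 / α * ((xp - x) ⬝ᵥ (xp - x))) / 2 := by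
        ring
      linarith
    linarith
  -- Step B : m xp ≤ m y
  have stepB : m xp ≤ m y := hxp y
  -- Step C
  have hyx : y - x = t • d := by rw [hy, add_sub_cancel_left]
  have hdots1 : (y - x) ⬝ᵥ (A.mulVec x - b) = t * (d ⬝ᵥ (A.mulVec x - b)) := by
    rw [hyx, smul_dotProduct, smul_eq_mul]
  have hdots2 : (y - x) ⬝ᵥ (y - x) = t * t * (d ⬝ᵥ d) := by
    rw [hyx, smul_dotProduct, dotProduct_smul, smul_eq_mul, smul_eq_mul]; ring
  have hfstar : f xstar = f x + d ⬝ᵥ (A.mulVec x - b) + 1 / 2 * (d ⬝ᵥ A.mulVec d) := by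
    rw [expand x xstar]
  have hl1 : ∑ i, |y i| ≤ (1 - t) * ∑ i, |x i| + t * ∑ i, |xstar i| := by
    rw [Finset.mul_sum, Finset.mul_sum, ← Finset.sum_add_distrib]
    apply Finset.sum_le_sum
    intro i _
    have : y i = (1 - t) * x i + t * xstar i := by
      simp [hy, hd]; ring
    rw [this]
    calc |(1 - t) * x i + t * xstar i| ≤ |(1 - t) * x i| + |t * xstar i| := abs_add_le _ _
      _ = (1 - t) * |x i| + t * |xstar i| := by
          rw [abs_mul, abs_mul, abs_of_nonneg (by linarith), abs_of_nonneg (le_of_lt ht0)]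
  have hqd := hAlow d
  have stepC : m y ≤ (1 - t) * F x + t * F xstar := by
    rw [hm, hdots1, hdots2, hF, hF]
    have hdg : d ⬝ᵥ (A.mulVec x - b) = f xstar - f x - 1 / 2 * (d ⬝ᵥ A.mulVec d) := by
      linarith
    rw [hdg]
    have hτl1 : τ * ∑ i, |y i| ≤ τ * ((1 - t) * ∑ i, |x i| + t * ∑ i, |xstar i|) :=
      mul_le_mul_of_nonneg_left hl1 hτ
    -- coefficient: 1/(2α) * t * t = t * lam / 2
    have hcoef : 1 / (2 * α) * (t * t) = t * lam / 2 := by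
      rw [ht]; field_simp
    nlinarith [mul_le_mul_of_nonneg_left hqd (le_of_lt ht0), hself d]
  -- combine
  have hcomb : F xp ≤ (1 - t) * F x + t * F xstar := le_trans stepA (le_trans stepB stepC)
  have hx := hxstar x
  nlinarith [hcomb]
end

section
/- Let m(y) = f(x) + (y-x)ᵀg + (1/(2α))||y-x||² + τ||y||₁ be the ISTA model at x, let x⁺ = x - αψ(x) be the subspace ISTA step, and let x_full = x - αω(x) - αψ(x) be the full ISTA step. Then m(x_full) = m(x⁺) - (α/2)||ω(x)||². -/
open Matrix in
theorem full_vs_subspace_ista_model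
    (n : ℕ) (A : Matrix (Fin n) (Fin n) ℝ) (b : Fin n → ℝ)
    (τ α : ℝ) (hτ : 0 ≤ τ) (hα : 0 < α)
    (x : Fin n → ℝ)
    (f : (Fin n → ℝ) → ℝ) (hf : ∀ y, f y = 1 / 2 * (y ⬝ᵥ A.mulVec y) - b ⬝ᵥ y)
    (g : Fin n → ℝ) (hg : g = A.mulVec x - b)
    (omega psi : Fin n → ℝ)
    (homega : ∀ i, omega i =
      if x i ≠ 0 then 0
      else if |g i| ≤ τ then 0
      else g i - τ * Real.sign (g i))
    (hpsi : ∀ i, psi i =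
      if x i = 0 then 0
      else 1 / α * (x i - max (|x i - α * g i| - α * τ) 0 * Real.sign (x i - α * g i)))
    (m : (Fin n → ℝ) → ℝ)
    (hm : ∀ y, m y = f x + (y - x) ⬝ᵥ g
        + 1 / (2 * α) * ((y - x) ⬝ᵥ (y - x)) + τ * ∑ i, |y i|) :
    m (x - α • omega - α • psi) = m (x - α • psi) - α / 2 * (omega ⬝ᵥ omega) := by
  have hmul : ∀ i, omega i * psi i = 0 := by
    intro i
    rcases eq_or_ne (x i) 0 with h | h
    · simp [hpsi i, h]
    · simp [homega i, h]
  have key2 : ∀ i, omega i * g i = omega i * omega i + τ * |omega i| := by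
    intro i
    rcases ne_or_eq (x i) 0 with h | h
    · simp [homega i, h]
    · rcases le_or_gt (|g i|) τ with h2 | h2
      · simp [homega i, h, h2]
      · have hω : omega i = g i - τ * Real.sign (g i) := by
          simp [homega i, h, not_le.mpr h2]
        have hgne : g i ≠ 0 := by
          intro h0; rw [h0] at h2; simp at h2; linarith
        rcases hgne.lt_or_gt with hneg | hpos
        · have hs : Real.sign (g i) = -1 := Real.sign_of_neg hneg
          rw [hω, hs]
          have hlt : g i < -τ := by rw [abs_of_neg hneg] at h2; linarith
          rw [abs_of_neg (by linarith : g i - τ * (-1) < 0)]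
          ring
        · have hs : Real.sign (g i) = 1 := Real.sign_of_pos hpos
          rw [hω, hs]
          have hlt : τ < g i := by rwa [abs_of_pos hpos] at h2
          rw [abs_of_pos (by linarith : (0:ℝ) < g i - τ * 1)]
          ring
  have key3 : ∀ i, |x i - α * omega i - α * psi i| = |x i - α * psi i| + α * |omega i| := by
    intro i
    rcases eq_or_ne (x i) 0 with h | h
    · have hψ : psi i = 0 := by simp [hpsi i, h]
      simp [h, hψ, abs_mul, abs_of_pos hα]
    · have hω : omega i = 0 := by simp [homega i, h]
      simp [hω]
  simp only [hm, dotProduct, Pi.sub_apply, Pi.smul_apply, smul_eq_mul]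
  have E1 : ∑ i, (x i - α * omega i - α * psi i - x i) * g i
      = (∑ i, (x i - α * psi i - x i) * g i)
        - α * (∑ i, omega i * omega i) - α * τ * (∑ i, |omega i|) := by
    have h : ∀ i ∈ Finset.univ, (x i - α * omega i - α * psi i - x i) * g i
        = (x i - α * psi i - x i) * g i
          - (α * (omega i * omega i) + α * τ * |omega i|) := by
      intro i _
      linear_combination (-α) * key2 i
    rw [Finset.sum_congr rfl h, Finset.sum_sub_distrib, Finset.sum_add_distrib,
      Finset.mul_sum, Finset.mul_sum]
    ring
  have E2 : ∑ i, (x i - α * omega i - α * psi i - x i) * (x i - α * omega i - α * psi i - x i)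
      = (∑ i, (x i - α * psi i - x i) * (x i - α * psi i - x i))
        + α ^ 2 * (∑ i, omega i * omega i) := by
    have h : ∀ i ∈ Finset.univ, (x i - α * omega i - α * psi i - x i) * (x i - α * omega i - α * psi i - x i)
        = (x i - α * psi i - x i) * (x i - α * psi i - x i)
          + α ^ 2 * (omega i * omega i) := by
      intro i _
      linear_combination (2 * α ^ 2) * hmul i
    rw [Finset.sum_congr rfl h, Finset.sum_add_distrib, Finset.mul_sum]
  have E3 : ∑ i, |x i - α * omega i - α * psi i|
      = (∑ i, |x i - α * psi i|) + α * (∑ i, |omega i|) := by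
    rw [Finset.sum_congr rfl (fun i _ => key3 i), Finset.sum_add_distrib, Finset.mul_sum]
  rw [E1, E2, E3]
  field_simp
  ring
end

section
/- The subspace ISTA step x⁺ = x - αψ(x) satisfies m(x⁺) ≤ m(x) - (α/2)||ψ(x)||², where m is the ISTA model at x. -/
/-- Soft-threshold optimality key inequality. -/
lemma soft_key (c u t : ℝ) (hc : 0 ≤ c) :
    c * |max (|u| - c) 0 * Real.sign u|
      + (u - max (|u| - c) 0 * Real.sign u) * (t - max (|u| - c) 0 * Real.sign u)
      ≤ c * |t| := by
  rcases lt_trichotomy u 0 with h | h | h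
  · rw [Real.sign_of_neg h, abs_of_neg h]
    rcases le_or_gt (-u - c) 0 with h2 | h2
    · rw [max_eq_right h2]
      simp only [zero_mul, abs_zero, mul_zero, sub_zero, add_zero, zero_add]
      nlinarith [le_abs_self (u * t), abs_mul u t, abs_of_neg h, abs_nonneg t]
    · rw [max_eq_left h2.le]
      have h3 : u + c < 0 := by linarith
      have h4 : (-u - c) * (-1 : ℝ) = u + c := by ring
      rw [h4, abs_of_neg h3]
      nlinarith [neg_abs_le t, abs_nonneg t]
  · subst h
    simp only [Real.sign_zero, mul_zero, abs_zero, sub_zero, zero_mul, add_zero, zero_add,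
      zero_sub, neg_mul, zero_mul, neg_zero]
    positivity
  · rw [Real.sign_of_pos h, abs_of_pos h]
    rcases le_or_gt (u - c) 0 with h2 | h2
    · rw [max_eq_right h2]
      simp only [zero_mul, abs_zero, mul_zero, sub_zero, add_zero, zero_add]
      nlinarith [le_abs_self (u * t), abs_mul u t, abs_of_pos h, abs_nonneg t]
    · rw [max_eq_left h2.le]
      have h3 : 0 < u - c := h2
      rw [mul_one, abs_of_pos h3]
      nlinarith [neg_abs_le t, abs_nonneg t, le_abs_self t]

open Matrix in
theorem subspace_ista_model_decrease
    (n : ℕ) (A : Matrix (Fin n) (Fin n) ℝ) (b : Fin n → ℝ)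
    (τ α : ℝ) (hτ : 0 ≤ τ) (hα : 0 < α)
    (x : Fin n → ℝ)
    (f : (Fin n → ℝ) → ℝ) (hf : ∀ y, f y = 1 / 2 * (y ⬝ᵥ A.mulVec y) - b ⬝ᵥ y)
    (g : Fin n → ℝ) (hg : g = A.mulVec x - b)
    (psi : Fin n → ℝ)
    (hpsi : ∀ i, psi i =
      if x i = 0 then 0
      else 1 / α * (x i - max (|x i - α * g i| - α * τ) 0 * Real.sign (x i - α * g i)))
    (m : (Fin n → ℝ) → ℝ)
    (hm : ∀ y, m y = f x + (y - x) ⬝ᵥ g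
        + 1 / (2 * α) * ((y - x) ⬝ᵥ (y - x)) + τ * ∑ i, |y i|) :
    m (x - α • psi) ≤ m x - α / 2 * (psi ⬝ᵥ psi) := by
  have hαne : α ≠ 0 := ne_of_gt hα
  -- per-coordinate inequality
  have key2 : ∀ i, α * (psi i * psi i) - α * (psi i * g i)
      + (τ * |x i - α * psi i| - τ * |x i|) ≤ 0 := by
    intro i
    by_cases hx : x i = 0
    · rw [hpsi i, if_pos hx, hx]; simp
    · have hp : psi i = 1 / α * (x i - max (|x i - α * g i| - α * τ) 0
          * Real.sign (x i - α * g i)) := by rw [hpsi i, if_neg hx]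
      set yv := max (|x i - α * g i| - α * τ) 0 * Real.sign (x i - α * g i) with hyv
      have hkey := soft_key (α * τ) (x i - α * g i) (x i)
        (mul_nonneg hα.le hτ)
      rw [← hyv] at hkey
      have hsub : x i - α * psi i = yv := by rw [hp]; field_simp; ring
      rw [hsub, hp]
      have expand : α * (1 / α * (x i - yv) * (1 / α * (x i - yv)))
          = (x i - yv) * (x i - yv) / α := by field_simp
      have expand2 : α * (1 / α * (x i - yv) * g i) = (x i - yv) * g i := by
        field_simp
      rw [expand, expand2]
      have hdd : (x i - yv) * (x i - yv) / α * α = (x i - yv) * (x i - yv) := by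
        field_simp
      nlinarith [hkey, hdd, hα]
  have hfin : ∑ i, (α * (psi i * psi i) - α * (psi i * g i)
      + (τ * |x i - α * psi i| - τ * |x i|)) ≤ 0 :=
    Finset.sum_nonpos (fun i _ => key2 i)
  rw [Finset.sum_add_distrib, Finset.sum_sub_distrib, Finset.sum_sub_distrib,
    ← Finset.mul_sum, ← Finset.mul_sum, ← Finset.mul_sum, ← Finset.mul_sum] at hfin
  rw [hm, hm]
  have e0 : (x - x) = (0 : Fin n → ℝ) := sub_self x
  have e1 : ((x - α • psi) - x) ⬝ᵥ g = -(α * (psi ⬝ᵥ g)) := by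
    simp only [dotProduct, Pi.sub_apply, Pi.smul_apply, smul_eq_mul,
      Finset.mul_sum, ← Finset.sum_neg_distrib]
    exact Finset.sum_congr rfl (fun i _ => by ring)
  have e2 : ((x - α • psi) - x) ⬝ᵥ ((x - α • psi) - x) = α * α * (psi ⬝ᵥ psi) := by
    simp only [dotProduct, Pi.sub_apply, Pi.smul_apply, smul_eq_mul,
      Finset.mul_sum]
    exact Finset.sum_congr rfl (fun i _ => by ring)
  have e3 : 1 / (2 * α) * (α * α * (psi ⬝ᵥ psi)) = α / 2 * (psi ⬝ᵥ psi) := by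
    field_simp
  rw [e0, e1, e2, e3]
  simp only [zero_dotProduct, Pi.sub_apply, Pi.smul_apply, smul_eq_mul, mul_zero]
  have e4 : (psi ⬝ᵥ g) = ∑ i, psi i * g i := rfl
  have e5 : (psi ⬝ᵥ psi) = ∑ i, psi i * psi i := rfl
  rw [e4, e5] at *
  linarith [hfin]
end

section
/- If ||ω(x)|| ≤ ||ψ(x)|| (the gradient balance condition holds), then the subspace ISTA step x⁺ = x - αψ(x) with 0 < α ≤ 1/L satisfies F(x⁺) - F(x*) ≤ (1 - (λα)/2)(F(x) - F(x*)). -/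
set_option maxHeartbeats 1000000

lemma prox_scalar (α τ xi gi zi : ℝ) (hα : 0 < α) (hτ : 0 ≤ τ) :
    gi * (max (|xi - α * gi| - α * τ) 0 * Real.sign (xi - α * gi) - zi)
      + τ * (|max (|xi - α * gi| - α * τ) 0 * Real.sign (xi - α * gi)| - |zi|)
    ≤ 1/(2*α) * ((zi - xi)^2
        - (max (|xi - α * gi| - α * τ) 0 * Real.sign (xi - α * gi) - xi)^2
        - (zi - max (|xi - α * gi| - α * τ) 0 * Real.sign (xi - α * gi))^2) := by
  set u := xi - α * gi with hu
  set T := max (|u| - α * τ) 0 * Real.sign u with hT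
  have hr : 0 ≤ α * τ := mul_nonneg hα.le hτ
  have h : (zi - T) * (u - T) ≤ α * τ * (|zi| - |T|) := by
    rcases le_or_gt |u| (α*τ) with hle | hgt
    · have hT0 : T = 0 := by rw [hT, max_eq_right (by linarith)]; ring
      rw [hT0]
      have h1 : zi * u ≤ |zi| * |u| := by
        calc zi * u ≤ |zi * u| := le_abs_self _
          _ = |zi| * |u| := abs_mul _ _
      have h2 : |zi| * |u| ≤ |zi| * (α * τ) :=
        mul_le_mul_of_nonneg_left hle (abs_nonneg zi)
      simp only [abs_zero, sub_zero]
      nlinarith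
    · rcases lt_trichotomy u 0 with hun | h0 | hup
      · have habs : |u| = -u := abs_of_neg hun
        rw [habs] at hgt
        have hTval : T = u + α*τ := by
          rw [hT, Real.sign_of_neg hun, habs, max_eq_left (by linarith)]; ring
        have hTneg : T < 0 := by rw [hTval]; linarith
        have hTabs : |T| = -T := abs_of_neg hTneg
        have key : α * τ * (-zi) ≤ α * τ * |zi| :=
          mul_le_mul_of_nonneg_left (neg_le_abs zi) hr
        rw [hTabs, hTval]; nlinarith
      · exfalso; rw [h0] at hgt; simp at hgt; linarith
      · have habs : |u| = u := abs_of_pos hup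
        rw [habs] at hgt
        have hTval : T = u - α*τ := by
          rw [hT, Real.sign_of_pos hup, habs, max_eq_left (by linarith)]; ring
        have hTpos : 0 ≤ T := by rw [hTval]; linarith
        have hTabs : |T| = T := abs_of_nonneg hTpos
        have key : α * τ * zi ≤ α * τ * |zi| :=
          mul_le_mul_of_nonneg_left (le_abs_self zi) hr
        rw [hTabs, hTval]; nlinarith
  rw [hu] at h
  have h2 : (0:ℝ) < 2*α := by linarith
  rw [show (1:ℝ)/(2*α) * ((zi - xi)^2 - (T - xi)^2 - (zi - T)^2)
      = ((zi - xi)^2 - (T - xi)^2 - (zi - T)^2) / (2*α) from by ring,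
    le_div_iff₀ h2]
  nlinarith [h]

open Matrix in
theorem subspace_ista_linear_decrease
    (n : ℕ) (A : Matrix (Fin n) (Fin n) ℝ) (hA : A.IsSymm)
    (lam L : ℝ) (hlam : 0 < lam)
    (hAlow : ∀ y : Fin n → ℝ, lam * (y ⬝ᵥ y) ≤ y ⬝ᵥ A.mulVec y)
    (hAup : ∀ y : Fin n → ℝ, y ⬝ᵥ A.mulVec y ≤ L * (y ⬝ᵥ y))
    (b : Fin n → ℝ) (τ : ℝ) (hτ : 0 ≤ τ)
    (F : (Fin n → ℝ) → ℝ)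
    (hF : ∀ y, F y = 1 / 2 * (y ⬝ᵥ A.mulVec y) - b ⬝ᵥ y + τ * ∑ i, |y i|)
    (xstar : Fin n → ℝ) (hxstar : ∀ y, F xstar ≤ F y)
    (x : Fin n → ℝ) (α : ℝ) (hα0 : 0 < α) (hαL : α ≤ 1 / L)
    (g : Fin n → ℝ) (hg : g = A.mulVec x - b)
    (omega psi : Fin n → ℝ)
    (homega : ∀ i, omega i =
      if x i ≠ 0 then 0
      else if |g i| ≤ τ then 0
      else g i - τ * Real.sign (g i))
    (hpsi : ∀ i, psi i =
      if x i = 0 then 0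
      else 1 / α * (x i - max (|x i - α * g i| - α * τ) 0 * Real.sign (x i - α * g i)))
    (hbalance : Real.sqrt (omega ⬝ᵥ omega) ≤ Real.sqrt (psi ⬝ᵥ psi)) :
    F (x - α • psi) - F xstar ≤ (1 - lam * α / 2) * (F x - F xstar) := by
  rcases Nat.eq_zero_or_pos n with hn | hn
  · subst hn
    have h1 : x - α • psi = xstar := funext fun i => i.elim0
    have h2 : x = xstar := funext fun i => i.elim0
    rw [h1, h2]; simp
  -- main case : n ≥ 1
  set p := x - α • psi with hp
  set t := lam * α with ht
  have hpi : ∀ i, p i = x i - α * psi i := fun i => by rw [hp]; rfl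
  have hpS : ∀ i, x i = 0 → p i = x i := by
    intro i hi; rw [hpi, hpsi i, if_pos hi]; ring
  have hpT : ∀ i, x i ≠ 0 →
      p i = max (|x i - α * g i| - α * τ) 0 * Real.sign (x i - α * g i) := by
    intro i hi; rw [hpi, hpsi i, if_neg hi]; field_simp; ring
  -- lam ≤ L, L bounds
  have hone : (0:ℝ) < (fun _ : Fin n => (1:ℝ)) ⬝ᵥ (fun _ => (1:ℝ)) := by
    simp only [dotProduct, mul_one, Finset.sum_const, Finset.card_univ, Fintype.card_fin,
      nsmul_eq_mul]
    exact_mod_cast hn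
  have hlamL : lam ≤ L := by
    have h1 := hAlow (fun _ => (1:ℝ))
    have h2 := hAup (fun _ => (1:ℝ))
    nlinarith
  have hL0 : 0 < L := lt_of_lt_of_le hlam hlamL
  have hLα : L * α ≤ 1 := by
    have := (le_div_iff₀ hL0).mp hαL
    linarith
  have hLinv : L ≤ 1/α := by rw [le_div_iff₀ hα0]; linarith
  have ht0 : 0 < t := mul_pos hlam hα0
  have ht1 : t ≤ 1 := by nlinarith
  -- symmetry and quadratic expansion
  have hsym : ∀ u v : Fin n → ℝ, u ⬝ᵥ A.mulVec v = v ⬝ᵥ A.mulVec u := by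
    intro u v
    rw [Matrix.dotProduct_mulVec, ← Matrix.mulVec_transpose, hA, dotProduct_comm]
  have hquad : ∀ y, F y = F x + g ⬝ᵥ (y - x) + 1/2 * ((y - x) ⬝ᵥ A.mulVec (y - x))
      + τ * ((∑ i, |y i|) - ∑ i, |x i|) := by
    intro y
    rw [hF y, hF x, hg, Matrix.mulVec_sub]
    simp only [dotProduct_sub, sub_dotProduct]
    linarith [dotProduct_comm (A.mulVec x) x, dotProduct_comm (A.mulVec x) y,
      hsym y x]
  -- key componentwise inequality
  have hkey : ∀ (i : Fin n) (zi : ℝ), g i * (p i - zi) + τ * (|p i| - |zi|) ≤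
      (if x i = 0 then |omega i| * |zi|
       else 1/(2*α) * ((zi - x i)^2 - (p i - x i)^2 - (zi - p i)^2)) := by
    intro i zi
    by_cases hi : x i = 0
    · rw [if_pos hi, hpS i hi, hi]
      simp only [abs_zero, zero_sub, mul_zero]
      rw [homega i, if_neg (by simpa using hi)]
      by_cases hgi : |g i| ≤ τ
      · rw [if_pos hgi]
        have h1 : -(g i * zi) ≤ |g i| * |zi| := by
          calc -(g i * zi) ≤ |g i * zi| := neg_le_abs _
            _ = |g i| * |zi| := abs_mul _ _
        have h2 : |g i| * |zi| ≤ τ * |zi| :=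
          mul_le_mul_of_nonneg_right hgi (abs_nonneg zi)
        simp only [abs_zero]
        nlinarith
      · rw [if_neg hgi]
        push_neg at hgi
        have hg0 : g i ≠ 0 := by
          intro h; rw [h] at hgi; simp at hgi; linarith
      
        rcases lt_or_gt_of_ne hg0 with hneg | hpos
        · rw [Real.sign_of_neg hneg]
          have habs : |g i| = -(g i) := abs_of_neg hneg
          rw [habs] at hgi
          have : |g i - τ * (-1)| = -(g i) - τ := by
            rw [abs_of_neg (by linarith)]; ring
          rw [this]
          have key : (-(g i)) * zi ≤ (-(g i)) * |zi| :=
            mul_le_mul_of_nonneg_left (le_abs_self zi) (by linarith)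
          nlinarith [abs_nonneg zi]
        · rw [Real.sign_of_pos hpos]
          have habs : |g i| = g i := abs_of_pos hpos
          rw [habs] at hgi
          have : |g i - τ * 1| = g i - τ := by
            rw [abs_of_pos (by linarith : (0:ℝ) < g i - τ * 1)]; ring
          rw [this]
          have key : g i * (-zi) ≤ g i * |zi| :=
            mul_le_mul_of_nonneg_left (neg_le_abs zi) (by linarith)
          nlinarith [abs_nonneg zi]
    · rw [if_neg hi, hpT i hi]
      exact prox_scalar α τ (x i) (g i) zi hα0 hτ
  -- master inequality
  have hmaster : ∀ z : Fin n → ℝ, F p ≤ F z +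
      ∑ i, ((if x i = 0 then |omega i| * |z i|
             else 1/(2*α) * ((z i - x i)^2 - (z i - p i)^2)) - lam/2 * (z i - x i)^2) := by
    intro z
    have hq1 := hquad p
    have hq2 := hquad z
    have hdp : (p - x) ⬝ᵥ (p - x) = ∑ i, (p i - x i)^2 := by
      simp only [dotProduct, Pi.sub_apply]
      exact Finset.sum_congr rfl fun i _ => (pow_two _).symm
    have hdz : (z - x) ⬝ᵥ (z - x) = ∑ i, (z i - x i)^2 := by
      simp only [dotProduct, Pi.sub_apply]
      exact Finset.sum_congr rfl fun i _ => (pow_two _).symm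
    have hup : 1/2 * ((p - x) ⬝ᵥ A.mulVec (p - x)) ≤ 1/(2*α) * ∑ i, (p i - x i)^2 := by
      have h1 := hAup (p - x)
      rw [hdp] at h1
      have h3 : 0 ≤ ∑ i, (p i - x i)^2 := Finset.sum_nonneg fun i _ => sq_nonneg _
      have h4 : L * ∑ i, (p i - x i)^2 ≤ 1/α * ∑ i, (p i - x i)^2 :=
        mul_le_mul_of_nonneg_right hLinv h3
      have h5 : 1/(2*α) * ∑ i, (p i - x i)^2 = 1/2 * (1/α * ∑ i, (p i - x i)^2) := by
        ring
      linarith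
    have hlow : lam/2 * ∑ i, (z i - x i)^2 ≤ 1/2 * ((z - x) ⬝ᵥ A.mulVec (z - x)) := by
      have h1 := hAlow (z - x)
      rw [hdz] at h1
      linarith
    have heg : g ⬝ᵥ (p - x) - g ⬝ᵥ (z - x) = ∑ i, g i * (p i - z i) := by
      simp only [dotProduct, Pi.sub_apply]
      rw [← Finset.sum_sub_distrib]
      exact Finset.sum_congr rfl fun i _ => by ring
    have het : τ * ((∑ i, |p i|) - ∑ i, |x i|) - τ * ((∑ i, |z i|) - ∑ i, |x i|)
        = ∑ i, τ * (|p i| - |z i|) := by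
      rw [← Finset.mul_sum, Finset.sum_sub_distrib]
      ring
    have hE : g ⬝ᵥ (p - x) - g ⬝ᵥ (z - x)
        + (τ * ((∑ i, |p i|) - ∑ i, |x i|) - τ * ((∑ i, |z i|) - ∑ i, |x i|))
        = ∑ i, (g i * (p i - z i) + τ * (|p i| - |z i|)) := by
      rw [Finset.sum_add_distrib, ← heg, ← het]
    have hks : ∑ i, (g i * (p i - z i) + τ * (|p i| - |z i|)) ≤
        ∑ i, (if x i = 0 then |omega i| * |z i|
              else 1/(2*α) * ((z i - x i)^2 - (p i - x i)^2 - (z i - p i)^2)) :=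
      Finset.sum_le_sum fun i _ => hkey i (z i)
    have hCC : (∑ i, (if x i = 0 then |omega i| * |z i|
            else 1/(2*α) * ((z i - x i)^2 - (p i - x i)^2 - (z i - p i)^2)))
          + 1/(2*α) * ∑ i, (p i - x i)^2
        = ∑ i, (if x i = 0 then |omega i| * |z i|
                else 1/(2*α) * ((z i - x i)^2 - (z i - p i)^2)) := by
      rw [Finset.mul_sum, ← Finset.sum_add_distrib]
      refine Finset.sum_congr rfl fun i _ => ?_
      by_cases hi : x i = 0
      · rw [if_pos hi, if_pos hi, hpS i hi]; ring
      · rw [if_neg hi, if_neg hi]; ring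
    have hsplit : ∑ i, ((if x i = 0 then |omega i| * |z i|
            else 1/(2*α) * ((z i - x i)^2 - (z i - p i)^2)) - lam/2 * (z i - x i)^2)
        = (∑ i, (if x i = 0 then |omega i| * |z i|
                 else 1/(2*α) * ((z i - x i)^2 - (z i - p i)^2)))
          - lam/2 * ∑ i, (z i - x i)^2 := by
      rw [Finset.sum_sub_distrib, Finset.mul_sum]
    linarith [hq1, hq2, hup, hlow, hE, hks, hCC, hsplit]
  -- descent inequality
  have hD : F p ≤ F x - α/2 * (psi ⬝ᵥ psi) := by
    have h := hmaster x
    have hzero : ∑ i, ((if x i = 0 then |omega i| * |x i|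
            else 1/(2*α) * ((x i - x i)^2 - (x i - p i)^2)) - lam/2 * (x i - x i)^2)
        = -(α/2 * (psi ⬝ᵥ psi)) := by
      have h1 : -(α/2 * (psi ⬝ᵥ psi)) = ∑ i, -(α/2 * (psi i * psi i)) := by
        simp only [dotProduct]
        rw [Finset.mul_sum, ← Finset.sum_neg_distrib]
      rw [h1]
      refine Finset.sum_congr rfl fun i _ => ?_
      by_cases hi : x i = 0
      · rw [if_pos hi, hpsi i, if_pos hi, hi]; simp
      · rw [if_neg hi]
        have hxp : x i - p i = α * psi i := by rw [hpi]; ring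
        rw [hxp]
        field_simp
        ring
    linarith [h, hzero.le, hzero.ge]
  -- balance squared
  have hψ0 : 0 ≤ psi ⬝ᵥ psi := Finset.sum_nonneg fun i _ => mul_self_nonneg _
  have hω0 : 0 ≤ omega ⬝ᵥ omega := Finset.sum_nonneg fun i _ => mul_self_nonneg _
  have hbal2 : omega ⬝ᵥ omega ≤ psi ⬝ᵥ psi := by
    calc omega ⬝ᵥ omega = Real.sqrt (omega ⬝ᵥ omega) ^ 2 := (Real.sq_sqrt hω0).symm
      _ ≤ Real.sqrt (psi ⬝ᵥ psi) ^ 2 := by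
          exact pow_le_pow_left₀ (Real.sqrt_nonneg _) hbalance 2
      _ = psi ⬝ᵥ psi := Real.sq_sqrt hψ0
  have hbal3 : α/2 * (omega ⬝ᵥ omega) ≤ α/2 * (psi ⬝ᵥ psi) :=
    mul_le_mul_of_nonneg_left hbal2 (by positivity)
  -- segment point
  set z := x + t • (xstar - x) with hzd
  have hzi : ∀ i, z i = x i + t * (xstar i - x i) := fun i => by rw [hzd]; rfl
  have hzx : z - x = t • (xstar - x) := by rw [hzd]; exact add_sub_cancel_left _ _
  have hFz : F z ≤ (1 - t) * F x + t * F xstar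
      - t*(1-t)/2 * ((xstar - x) ⬝ᵥ A.mulVec (xstar - x)) := by
    have hq := hquad z
    have hqs := hquad xstar
    have hgz : g ⬝ᵥ (z - x) = t * (g ⬝ᵥ (xstar - x)) := by
      rw [hzx, dotProduct_smul]; simp
    have hQz : (z - x) ⬝ᵥ A.mulVec (z - x)
        = t * (t * ((xstar - x) ⬝ᵥ A.mulVec (xstar - x))) := by
      rw [hzx, Matrix.mulVec_smul, dotProduct_smul, smul_dotProduct]
      simp [mul_assoc]
    have habs : ∑ i, |z i| ≤ (1-t) * ∑ i, |x i| + t * ∑ i, |xstar i| := by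
      rw [Finset.mul_sum, Finset.mul_sum, ← Finset.sum_add_distrib]
      refine Finset.sum_le_sum fun i _ => ?_
      rw [hzi i, show x i + t * (xstar i - x i) = (1-t) * x i + t * xstar i from by ring]
      calc |(1-t) * x i + t * xstar i| ≤ |(1-t) * x i| + |t * xstar i| := abs_add_le _ _
        _ = (1-t) * |x i| + t * |xstar i| := by
            rw [abs_mul, abs_mul, abs_of_nonneg (by linarith), abs_of_nonneg ht0.le]
    have hτz : τ * ∑ i, |z i| ≤ τ * ((1-t) * ∑ i, |x i| + t * ∑ i, |xstar i|) :=
      mul_le_mul_of_nonneg_left habs hτ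
    rw [hq, hqs, hgz, hQz]
    nlinarith [hτz]
  -- bound on the sum at z
  have hCz : ∑ i, ((if x i = 0 then |omega i| * |z i|
          else 1/(2*α) * ((z i - x i)^2 - (z i - p i)^2)) - lam/2 * (z i - x i)^2)
      ≤ t*(1-t)*lam/2 * ((xstar - x) ⬝ᵥ (xstar - x)) + α/2 * (omega ⬝ᵥ omega) := by
    have hee : (xstar - x) ⬝ᵥ (xstar - x) = ∑ i, (xstar i - x i)^2 := by
      simp only [dotProduct, Pi.sub_apply]
      exact Finset.sum_congr rfl fun i _ => (pow_two _).symm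
    have hoo : omega ⬝ᵥ omega = ∑ i, omega i * omega i := rfl
    rw [hee, hoo, Finset.mul_sum, Finset.mul_sum, ← Finset.sum_add_distrib]
    refine Finset.sum_le_sum fun i _ => ?_
    by_cases hi : x i = 0
    · rw [if_pos hi, hzi i, hi]
      simp only [zero_add, sub_zero]
      have habs : |t * xstar i| = t * |xstar i| := by
        rw [abs_mul, abs_of_pos ht0]
      rw [habs, ht]
      have key : lam * α * (|omega i| * |xstar i|)
          ≤ lam^2 * α / 2 * (xstar i)^2 + α/2 * (omega i * omega i) := by
        rw [show omega i * omega i = |omega i| * |omega i| from (abs_mul_abs_self _).symm,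
          show (xstar i)^2 = |xstar i|^2 from (sq_abs _).symm]
        nlinarith [mul_nonneg hα0.le (sq_nonneg (|omega i| - lam * |xstar i|)),
          abs_nonneg (omega i), abs_nonneg (xstar i)]
      nlinarith [key]
    · rw [if_neg hi, homega i, if_pos hi, hzi i]
      have hident : 1/(2*α) * ((x i + t * (xstar i - x i) - x i)^2 - (z i - p i)^2)
          - lam/2 * (x i + t * (xstar i - x i) - x i)^2
          - t*(1-t)*lam/2 * (xstar i - x i)^2
          = -(1/(2*α)) * (z i - p i)^2 := by
        rw [ht]; field_simp; ring
      have hpos : (0:ℝ) ≤ 1/(2*α) := by positivity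
      nlinarith [sq_nonneg (z i - p i), hident]
  have hQe : t*(1-t)*lam/2 * ((xstar - x) ⬝ᵥ (xstar - x))
      ≤ t*(1-t)/2 * ((xstar - x) ⬝ᵥ A.mulVec (xstar - x)) := by
    have h1 := hAlow (xstar - x)
    have h2 : (0:ℝ) ≤ t*(1-t)/2 := by nlinarith
    nlinarith [mul_le_mul_of_nonneg_left h1 h2]
  have hm := hmaster z
  linarith [hm, hFz, hCz, hQe, hbal3, hD]
end

section
/- Componentwise comparison of proximal steps: for any j with x_j ≠ 0, the ISTA displacement ψ_j(x) and the unconstrained smooth displacement φ_j(x) = g_j(x) + τ sign(x_j) satisfy |ψ_j(x)| ≤ |φ_j(x)|; consequently ||ψ(x)|| ≤ ||φ(x)||. -/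
lemma key_psi_phi (t G x : ℝ) (ht : 0 ≤ t) (hx : x ≠ 0) :
    |x - max (|x - G| - t) 0 * Real.sign (x - G)| ≤ |G + t * Real.sign x| := by
  rcases hx.lt_or_gt with hx | hx
  · -- x < 0
    rw [Real.sign_of_neg hx]
    have hR : G + t * (-1) = G - t := by ring
    rw [hR]
    rcases le_or_gt (|x - G| - t) 0 with h | h
    · rw [max_eq_right h, zero_mul, sub_zero]
      have h1 : G - x ≤ |x - G| := by
        have := neg_abs_le (x - G); linarith
      calc |x| = -x := abs_of_neg hx
        _ ≤ -(G - t) := by linarith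
        _ ≤ |G - t| := neg_le_abs _
    · rw [max_eq_left h.le]
      rcases lt_trichotomy (x - G) 0 with hs | hs | hs
      · rw [Real.sign_of_neg hs]
        rw [abs_of_neg hs] at h ⊢
        have heq : x - (-(x - G) - t) * (-1) = G - t := by ring
        rw [heq]
      · exfalso; rw [hs, abs_zero] at h; linarith
      · rw [Real.sign_of_pos hs, mul_one]
        rw [abs_of_pos hs] at h ⊢
        have heq : x - (x - G - t) = G + t := by ring
        rw [heq]
        have hG : G < -t := by linarith
        rw [abs_of_neg (show G + t < 0 by linarith),
            abs_of_neg (show G - t < 0 by linarith)]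
        linarith
  · -- x > 0
    rw [Real.sign_of_pos hx, mul_one]
    rcases le_or_gt (|x - G| - t) 0 with h | h
    · rw [max_eq_right h, zero_mul, sub_zero]
      have h1 : x - G ≤ |x - G| := le_abs_self _
      calc |x| = x := abs_of_pos hx
        _ ≤ G + t := by linarith
        _ ≤ |G + t| := le_abs_self _
    · rw [max_eq_left h.le]
      rcases lt_trichotomy (x - G) 0 with hs | hs | hs
      · rw [Real.sign_of_neg hs]
        rw [abs_of_neg hs] at h ⊢
        have heq : x - (-(x - G) - t) * (-1) = G - t := by ring
        rw [heq]
        have hG : x + t < G := by linarith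
        rw [abs_of_pos (show (0:ℝ) < G - t by linarith),
            abs_of_pos (show (0:ℝ) < G + t by linarith)]
        linarith
      · exfalso; rw [hs, abs_zero] at h; linarith
      · rw [Real.sign_of_pos hs, mul_one]
        rw [abs_of_pos hs] at h ⊢
        have heq : x - (x - G - t) = G + t := by ring
        rw [heq]

open Matrix in
theorem psi_le_phi
    (n : ℕ) (A : Matrix (Fin n) (Fin n) ℝ) (b : Fin n → ℝ)
    (τ α : ℝ) (hτ : 0 ≤ τ) (hα : 0 < α)
    (x : Fin n → ℝ)
    (g : Fin n → ℝ) (hg : g = A.mulVec x - b)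
    (phi psi : Fin n → ℝ)
    (hphi : ∀ i, phi i =
      if x i = 0 then 0 else g i + τ * Real.sign (x i))
    (hpsi : ∀ i, psi i =
      if x i = 0 then 0
      else 1 / α * (x i - max (|x i - α * g i| - α * τ) 0 * Real.sign (x i - α * g i))) :
    (∀ j, x j ≠ 0 → |psi j| ≤ |phi j|) ∧
      Real.sqrt (psi ⬝ᵥ psi) ≤ Real.sqrt (phi ⬝ᵥ phi) := by
  have main : ∀ j, |psi j| ≤ |phi j| := by
    intro j
    by_cases hxj : x j = 0
    · rw [hphi j, hpsi j, if_pos hxj, if_pos hxj]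
    · rw [hphi j, hpsi j, if_neg hxj, if_neg hxj]
      have hk := key_psi_phi (α * τ) (α * g j) (x j) (by positivity) hxj
      have hr : |α * g j + α * τ * Real.sign (x j)| = α * |g j + τ * Real.sign (x j)| := by
        rw [show α * g j + α * τ * Real.sign (x j)
              = α * (g j + τ * Real.sign (x j)) by ring, abs_mul, abs_of_pos hα]
      rw [hr] at hk
      rw [abs_mul, abs_of_pos (show (0:ℝ) < 1 / α by positivity)]
      calc 1 / α * |x j - max (|x j - α * g j| - α * τ) 0 * Real.sign (x j - α * g j)|
          ≤ 1 / α * (α * |g j + τ * Real.sign (x j)|) :=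
            mul_le_mul_of_nonneg_left hk (by positivity)
        _ = |g j + τ * Real.sign (x j)| := by field_simp
  refine ⟨fun j _ => main j, ?_⟩
  apply Real.sqrt_le_sqrt
  unfold dotProduct
  apply Finset.sum_le_sum
  intro i _
  have h := main i
  calc psi i * psi i = |psi i| * |psi i| := (abs_mul_abs_self _).symm
    _ ≤ |phi i| * |phi i| := mul_le_mul h h (abs_nonneg _) (abs_nonneg _)
    _ = phi i * phi i := abs_mul_abs_self _
end

section
/- One-dimensional prox comparison: let m(y) = g(y - z) + (1/(2α))(y - z)² + τ|y| and m̄(y) = g(y - z) + (1/(2α))(y - z)² + τ σ y, where σ = sign(z) and z ≠ 0. Let p = argmin m and q = argmin m̄. Then |p - z| ≤ |q - z|. -/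
set_option maxHeartbeats 800000 in
theorem one_dim_prox_comparison
    (z g α τ : ℝ) (hz : z ≠ 0) (hα : 0 < α) (hτ : 0 ≤ τ)
    (p q : ℝ)
    (hp : ∀ y : ℝ, g * (p - z) + 1 / (2 * α) * (p - z) ^ 2 + τ * |p|
        ≤ g * (y - z) + 1 / (2 * α) * (y - z) ^ 2 + τ * |y|)
    (hq : ∀ y : ℝ, g * (q - z) + 1 / (2 * α) * (q - z) ^ 2 + τ * (Real.sign z * q)
        ≤ g * (y - z) + 1 / (2 * α) * (y - z) ^ 2 + τ * (Real.sign z * y)) :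
    |p - z| ≤ |q - z| := by
  set c : ℝ := 1 / (2 * α) with hc
  have hc0 : 0 < c := by positivity
  have hcα : c * α = 1/2 := by rw [hc]; field_simp
  set s : ℝ := Real.sign z with hs
  have hsz : (0 < z ∧ s = 1) ∨ (z < 0 ∧ s = -1) := by
    rcases hz.lt_or_gt with h | h
    · right; exact ⟨h, by rw [hs, Real.sign_of_neg h]⟩
    · left; exact ⟨h, by rw [hs, Real.sign_of_pos h]⟩
  -- q satisfies the exact stationarity equation
  have keyq : ∀ t : ℝ, 0 ≤ (g + 2*c*(q-z) + τ*s)*t + c*t^2 := by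
    intro t
    have h := hq (q + t)
    nlinarith [h]
  have hB : g + 2*c*(q-z) + τ*s = 0 := by
    by_contra hB
    set B : ℝ := g + 2*c*(q-z) + τ*s with hBdef
    have h := keyq (-B*α)
    have hB2 : 0 < B^2 := by positivity
    have e1 : c*(-B*α)^2 = (1/2)*(B^2*α) := by
      linear_combination (B^2*α)*hcα
    nlinarith [h, e1, mul_pos hB2 hα]
  have hqz : 2*c*(q - z) = -(g + τ*s) := by linarith
  -- variational inequality for p
  have keyp : ∀ t : ℝ, τ*|p| - τ*|p+t| ≤ (g + 2*c*(p-z))*t + c*t^2 := by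
    intro t; have h := hp (p + t); nlinarith [h]
  set A : ℝ := g + 2*c*(p-z) with hA
  have hmain : 2*c*|p - z| ≤ |g + τ*s| := by
    rcases lt_trichotomy p 0 with hp0 | hp0 | hp0
    · -- p < 0 : A = τ
      have h1 : A ≤ τ := by
        by_contra h
        push_neg at h
        have ht : 0 < (A - τ)*α := mul_pos (by linarith) hα
        have h2 := keyp (-((A - τ)*α))
        have habs1 : |p| = -p := abs_of_neg hp0
        have habs2 : |p + -((A - τ)*α)| = -(p + -((A - τ)*α)) := by
          apply abs_of_neg; linarith
        rw [habs1, habs2] at h2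
        have hd2 : 0 < (A - τ)^2 := pow_pos (by linarith) 2
        have e1 : c*((A - τ)*α)^2 = (1/2)*((A - τ)^2*α) := by
          linear_combination ((A - τ)^2*α)*hcα
        nlinarith [h2, e1, mul_pos hd2 hα]
      have h2 : τ ≤ A := by
        by_contra h
        push_neg at h
        have ht : 0 < (τ - A)*α := mul_pos (by linarith) hα
        set t0 : ℝ := min (-p) ((τ - A)*α) with ht0
        have ht1 : 0 < t0 := lt_min (by linarith) ht
        have ht2 : t0 ≤ -p := min_le_left _ _
        have ht3 : t0 ≤ (τ - A)*α := min_le_right _ _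
        have h2 := keyp t0
        have habs1 : |p| = -p := abs_of_neg hp0
        have habs2 : |p + t0| = -(p + t0) := by
          apply abs_of_nonpos; linarith
        rw [habs1, habs2] at h2
        have key1 : c*t0^2 ≤ c*t0*((τ - A)*α) := by nlinarith [ht3, mul_pos hc0 ht1]
        have key2 : c*t0*((τ - A)*α) = (1/2)*((τ - A)*t0) := by
          linear_combination (t0*(τ - A))*hcα
        have h3 : 0 < (τ - A)*t0 := mul_pos (by linarith) ht1
        nlinarith [h2, key1, key2, h3]
      have hAτ : A = τ := le_antisymm h1 h2
      have hpz : 2*c*(p - z) = -(g - τ) := by rw [hA] at hAτ; linarith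
      have habs : 2*c*|p - z| = |g - τ| := by
        have h4 : |2*c*(p - z)| = |(-(g - τ))| := by rw [hpz]
        rw [abs_mul, abs_of_pos (by linarith : (0:ℝ) < 2*c), abs_neg] at h4
        exact h4
      rw [habs]
      rcases hsz with ⟨hz0, hs1⟩ | ⟨hz0, hs1⟩
      · -- z > 0, s = 1 : g > τ since p < 0 < z
        have hg : τ < g := by nlinarith [hpz, hc0, hz0, mul_pos hc0 hz0]
        rw [hs1, mul_one, abs_of_pos (by linarith : (0:ℝ) < g - τ)]
        calc g - τ ≤ g + τ := by linarith
          _ ≤ |g + τ| := le_abs_self _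
      · have he : g + τ*(-1) = g - τ := by ring
        rw [hs1, he]
    · -- p = 0 : |A| ≤ τ
      have h1 : -τ ≤ A := by
        by_contra h
        push_neg at h
        have ht : 0 < (-τ - A)*α := mul_pos (by linarith) hα
        have h2 := keyp ((-τ - A)*α)
        rw [hp0] at h2
        simp only [zero_add, abs_zero] at h2
        rw [abs_of_pos ht] at h2
        have hd2 : 0 < (τ + A)^2 := by
          have h5 : 0 < -(τ + A) := by linarith
          nlinarith [pow_pos h5 2]
        have e1 : c*((-τ - A)*α)^2 = (1/2)*((τ + A)^2*α) := by
          linear_combination ((τ + A)^2*α)*hcα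
        nlinarith [h2, e1, mul_pos hd2 hα]
      have h2 : A ≤ τ := by
        by_contra h
        push_neg at h
        have ht : 0 < (A - τ)*α := mul_pos (by linarith) hα
        have h2 := keyp (-((A - τ)*α))
        rw [hp0] at h2
        simp only [zero_add, abs_zero, abs_neg] at h2
        rw [abs_of_pos ht] at h2
        have hd2 : 0 < (A - τ)^2 := pow_pos (by linarith) 2
        have e1 : c*((A - τ)*α)^2 = (1/2)*((A - τ)^2*α) := by
          linear_combination ((A - τ)^2*α)*hcα
        nlinarith [h2, e1, mul_pos hd2 hα]
      have hAz : A = g - 2*c*z := by rw [hA, hp0]; ring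
      rw [hp0]
      rcases hsz with ⟨hz0, hs1⟩ | ⟨hz0, hs1⟩
      · rw [hs1, mul_one, abs_of_neg (by linarith : (0:ℝ) - z < 0)]
        have hb : 2*c*z ≤ g + τ := by rw [hAz] at h1; linarith
        calc 2*c*(-(0 - z)) = 2*c*z := by ring
          _ ≤ g + τ := hb
          _ ≤ |g + τ| := le_abs_self _
      · rw [hs1, abs_of_pos (by linarith : (0:ℝ) < 0 - z)]
        have hb : 2*c*(-z) ≤ τ - g := by rw [hAz] at h2; linarith
        calc 2*c*(0 - z) = 2*c*(-z) := by ring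
          _ ≤ τ - g := hb
          _ = -(g + τ*(-1)) := by ring
          _ ≤ |g + τ*(-1)| := neg_le_abs _
    · -- p > 0 : A = -τ
      have h1 : -τ ≤ A := by
        by_contra h
        push_neg at h
        have ht : 0 < (-τ - A)*α := mul_pos (by linarith) hα
        have h2 := keyp ((-τ - A)*α)
        have habs1 : |p| = p := abs_of_pos hp0
        have habs2 : |p + (-τ - A)*α| = p + (-τ - A)*α := by
          apply abs_of_pos; linarith
        rw [habs1, habs2] at h2
        have hd2 : 0 < (τ + A)^2 := by
          have h5 : 0 < -(τ + A) := by linarith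
          nlinarith [pow_pos h5 2]
        have e1 : c*((-τ - A)*α)^2 = (1/2)*((τ + A)^2*α) := by
          linear_combination ((τ + A)^2*α)*hcα
        nlinarith [h2, e1, mul_pos hd2 hα]
      have h2 : A ≤ -τ := by
        by_contra h
        push_neg at h
        have ht : 0 < (A + τ)*α := mul_pos (by linarith) hα
        set t0 : ℝ := min p ((A + τ)*α) with ht0
        have ht1 : 0 < t0 := lt_min hp0 ht
        have ht2 : t0 ≤ p := min_le_left _ _
        have ht3 : t0 ≤ (A + τ)*α := min_le_right _ _
        have h2 := keyp (-t0)
        have habs1 : |p| = p := abs_of_pos hp0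
        have habs2 : |p + -t0| = p + -t0 := by
          apply abs_of_nonneg; linarith
        rw [habs1, habs2] at h2
        have key1 : c*t0^2 ≤ c*t0*((A + τ)*α) := by nlinarith [ht3, mul_pos hc0 ht1]
        have key2 : c*t0*((A + τ)*α) = (1/2)*((A + τ)*t0) := by
          linear_combination (t0*(A + τ))*hcα
        have h3 : 0 < (A + τ)*t0 := mul_pos (by linarith) ht1
        nlinarith [h2, key1, key2, h3]
      have hAτ : A = -τ := le_antisymm h2 h1
      have hpz : 2*c*(p - z) = -(g + τ) := by rw [hA] at hAτ; linarith
      have habs : 2*c*|p - z| = |g + τ| := by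
        have h4 : |2*c*(p - z)| = |(-(g + τ))| := by rw [hpz]
        rw [abs_mul, abs_of_pos (by linarith : (0:ℝ) < 2*c), abs_neg] at h4
        exact h4
      rw [habs]
      rcases hsz with ⟨hz0, hs1⟩ | ⟨hz0, hs1⟩
      · rw [hs1, mul_one]
      · -- z < 0, s = -1 : p > 0 > z so g + τ < 0
        have hg : g + τ < 0 := by nlinarith [hpz, hc0, hz0, mul_pos hc0 (neg_pos.mpr hz0)]
        rw [hs1, abs_of_neg hg]
        calc -(g + τ) ≤ -(g - τ) := by linarith
          _ = -(g + τ*(-1)) := by ring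
          _ ≤ |g + τ*(-1)| := neg_le_abs _
  -- finish
  have hq' : 2*c*|q - z| = |g + τ*s| := by
    have h4 : |2*c*(q - z)| = |(-(g + τ*s))| := by rw [hqz]
    rw [abs_mul, abs_of_pos (by linarith : (0:ℝ) < 2*c), abs_neg] at h4
    exact h4
  have hfin : 2*c*|p - z| ≤ 2*c*|q - z| := by rw [hq']; exact hmain
  exact le_of_mul_le_mul_left hfin (by linarith)
end

section
/- Finite active-set identification for ISTA: suppose x* minimizes F(x) = (1/2)xᵀAx - bᵀx + τ||x||₁ and satisfies strict complementarity (x*_i = 0 implies |g_i(x*)| < τ, where g(x) = Ax - b). If x is close enough to x* — specifically |x_i| < (αδ₂)/2 and |g_i(x)| < τ - δ₂ for all i with x*_i = 0, where δ₂ = min_{i: x*_i = 0} (τ - |g_i(x*)|)/2 — then the ISTA step sets the i-th coordinate to zero for every i with x*_i = 0: max(|x_i - α g_i(x)| - ατ, 0) = 0. -/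
open Matrix in
theorem ista_active_set_identification
    (n : ℕ) (A : Matrix (Fin n) (Fin n) ℝ) (hA : A.IsSymm)
    (hApos : ∀ y : Fin n → ℝ, y ≠ 0 → 0 < y ⬝ᵥ A.mulVec y)
    (b : Fin n → ℝ) (τ : ℝ) (hτ : 0 < τ) (α : ℝ) (hα : 0 < α)
    (F : (Fin n → ℝ) → ℝ)
    (hF : ∀ y, F y = 1 / 2 * (y ⬝ᵥ A.mulVec y) - b ⬝ᵥ y + τ * ∑ i, |y i|)
    (xstar : Fin n → ℝ) (hxstar : ∀ y, F xstar ≤ F y)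
    (hstrict : ∀ i, xstar i = 0 → |(A.mulVec xstar - b) i| < τ)
    (δ₂ : ℝ) (hδ₂pos : 0 < δ₂)
    (hδ₂ : ∀ i, xstar i = 0 → δ₂ ≤ (τ - |(A.mulVec xstar - b) i|) / 2)
    (x : Fin n → ℝ)
    (hclose1 : ∀ i, xstar i = 0 → |x i| < α * δ₂ / 2)
    (hclose2 : ∀ i, xstar i = 0 → |(A.mulVec x - b) i| < τ - δ₂) :
    ∀ i, xstar i = 0 → max (|x i - α * (A.mulVec x - b) i| - α * τ) 0 = 0 := by
  intro i hi
  have h1 := hclose1 i hi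
  have h2 := hclose2 i hi
  have hb : |x i - α * (A.mulVec x - b) i| ≤ |x i| + α * |(A.mulVec x - b) i| := by
    calc |x i - α * (A.mulVec x - b) i| ≤ |x i| + |α * (A.mulVec x - b) i| := abs_sub _ _
    _ = |x i| + α * |(A.mulVec x - b) i| := by rw [abs_mul, abs_of_pos hα]
  have : |x i - α * (A.mulVec x - b) i| < α * τ := by nlinarith
  exact max_eq_right (sub_nonpos.mpr this.le)
end
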